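/- Let A = ℤ[1/6][a₁, a₃] and let Γ = A[s,t]/(r₁, r₂) where r₁ = s⁴ − 6st + a₁s³ − 3a₁t − 3a₃s and r₂ = s⁶ − 27t² + 3a₁s⁵ − 9a₁s²t + 3a₁²s⁴ − 9a₁²st + a₁³s³ − 27a₃t. Assume Γ is a free A-module with basis the images of {1, s, s², s³, t, st, s²t, s³t}. Then the A-linear endomorphism of Γ given by multiplication by s has trace −4·a₁. -/

import Mathlib

open MvPolynomial

noncomputable section
set_option maxHeartbeats 4000000
set_option synthInstance.maxHeartbeats 1000000

variable (R : Type*) [CommRing R]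

/-- `A = R[a₁, a₃]`, with `a₁ = X 0` and `a₃ = X 1`. -/
abbrev CubicA := MvPolynomial (Fin 2) R

/-- `P = A[s, t]`, with `s = X 0` and `t = X 1`. -/
abbrev CubicP := MvPolynomial (Fin 2) (CubicA R)

def cubicA1 : CubicA R := X 0

def cubicA3 : CubicA R := X 1

def cubicS : CubicP R := X 0

def cubicT : CubicP R := X 1

/-- The first relation `r₁ = s⁴ − 6st + a₁s³ − 3a₁t − 3a₃s`. -/
def cubicR1 : CubicP R :=
  cubicS R ^ 4 - 6 * cubicS R * cubicT R + C (cubicA1 R) * cubicS R ^ 3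
    - 3 * C (cubicA1 R) * cubicT R - 3 * C (cubicA3 R) * cubicS R

/-- The second relation
`r₂ = s⁶ − 27t² + 3a₁s⁵ − 9a₁s²t + 3a₁²s⁴ − 9a₁²st + a₁³s³ − 27a₃t`. -/
def cubicR2 : CubicP R :=
  cubicS R ^ 6 - 27 * cubicT R ^ 2 + 3 * C (cubicA1 R) * cubicS R ^ 5
    - 9 * C (cubicA1 R) * cubicS R ^ 2 * cubicT R + 3 * C (cubicA1 R) ^ 2 * cubicS R ^ 4
    - 9 * C (cubicA1 R) ^ 2 * cubicS R * cubicT R + C (cubicA1 R) ^ 3 * cubicS R ^ 3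
    - 27 * C (cubicA3 R) * cubicT R

/-- `Γ = A[s,t]/(r₁, r₂)`. -/
abbrev CubicGamma := CubicP R ⧸ Ideal.span {cubicR1 R, cubicR2 R}

/-- The images of `{1, s, s², s³, t, st, s²t, s³t}`. -/
def cubicBasisElems : Fin 8 → CubicP R :=
  ![1, cubicS R, cubicS R ^ 2, cubicS R ^ 3, cubicT R, cubicS R * cubicT R,
    cubicS R ^ 2 * cubicT R, cubicS R ^ 3 * cubicT R]

/-- Let `A = ℤ[1/6][a₁,a₃]` (formalized over a commutative ring `R` in which `2` and `3` are
invertible) and `Γ = A[s,t]/(r₁, r₂)`.  If `Γ` is a free `A`-module with basis the images of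
`{1, s, s², s³, t, st, s²t, s³t}`, then the `A`-linear endomorphism of `Γ` given by
multiplication by `s` has trace `−4·a₁`. -/
theorem stmt7 (u2 u3 : R) (h2 : 2 * u2 = 1) (h3 : 3 * u3 = 1)
    (b : Module.Basis (Fin 8) (CubicA R) (CubicGamma R))
    (hb : ∀ i, b i = Ideal.Quotient.mk (Ideal.span {cubicR1 R, cubicR2 R})
      (cubicBasisElems R i)) :
    LinearMap.trace (CubicA R) (CubicGamma R)
      (LinearMap.mulLeft (CubicA R)
        (Ideal.Quotient.mk (Ideal.span {cubicR1 R, cubicR2 R}) (cubicS R)))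
      = -(4 * cubicA1 R) := by
  set I : Ideal (CubicP R) := Ideal.span {cubicR1 R, cubicR2 R} with hI
  set mk := Ideal.Quotient.mk I with hmk
  set f := LinearMap.mulLeft (CubicA R) (mk (cubicS R)) with hf
  have hr1mem : cubicR1 R ∈ I := Ideal.subset_span (Set.mem_insert _ _)
  have hr2mem : cubicR2 R ∈ I := Ideal.subset_span (Set.mem_insert_of_mem _ rfl)
  have smul_mk_aux : ∀ (c : CubicA R) (x : CubicP R),
      c • mk x = mk (C c * x) := by
    intro c x; rw [← smul_eq_C_mul]; rfl
  have hmul : ∀ x : CubicP R, f (mk x) = mk (cubicS R * x) := fun x => by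
    rw [hf, LinearMap.mulLeft_apply, ← map_mul]
  set a1 : CubicA R := cubicA1 R with ha1
  set a3 : CubicA R := cubicA3 R with ha3
  have hu3 : (C (C u3) : CubicP R) * 3 = 1 := by
    have h33 : ((3 : CubicP R)) = C (C (3 : R)) := by rw [map_ofNat, map_ofNat]
    rw [h33, ← map_mul, ← map_mul, mul_comm, h3, map_one, map_one]
  have third : ∀ x y : CubicP R, (3 : CubicP R) * x = y → x = C (C u3) * y := by
    intro x y hxy
    calc x = (C (C u3) * 3) * x := by rw [hu3, one_mul]
      _ = C (C u3) * (3 * x) := by ring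
      _ = C (C u3) * y := by rw [hxy]
  have he0 : cubicBasisElems R 0 = 1 := rfl
  have he1 : cubicBasisElems R 1 = cubicS R := rfl
  have he2 : cubicBasisElems R 2 = cubicS R ^ 2 := rfl
  have he3 : cubicBasisElems R 3 = cubicS R ^ 3 := rfl
  have he4 : cubicBasisElems R 4 = cubicT R := rfl
  have he5 : cubicBasisElems R 5 = cubicS R * cubicT R := rfl
  have he6 : cubicBasisElems R 6 = cubicS R ^ 2 * cubicT R := rfl
  have he7 : cubicBasisElems R 7 = cubicS R ^ 3 * cubicT R := rfl
  -- key identity for s^4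
  have key3 : f (b 3) = (6 : CubicA R) • b 5 + (-a1) • b 3 + (3 * a1) • b 4
      + (3 * a3) • b 1 := by
    simp only [hb, hmul, smul_mk_aux, ← map_add]
    rw [hmk, Ideal.Quotient.eq]
    refine Set.mem_of_eq_of_mem ?_ hr1mem
    simp only [cubicR1, ha1, ha3, he1, he3, he4, he5, map_mul, map_neg, map_ofNat,
      map_add, map_sub, map_pow]
    ring
  -- key identity for s^4 * t
  have key7 : f (b 7) = (3 * a1 * a3 - a1 ^ 4) • b 4
      + (-(6 * a3 ^ 2) - a1 ^ 3 * a3) • b 1 + (-(3 * a3) - 3 * a1 ^ 3) • b 5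
      + (-(4 * a1 ^ 2 * a3)) • b 2 + (-(4 * a1 ^ 2)) • b 6 + (-(3 * a1 * a3)) • b 3
      + (-(3 * a1)) • b 7 := by
    simp only [hb, hmul, smul_mk_aux, ← map_add]
    rw [hmk, Ideal.Quotient.eq]
    set P1 : CubicP R := -(6 * C a3) - C a1 ^ 3 - 9 * cubicT R - 4 * C a1 ^ 2 * cubicS R
      - 5 * C a1 * cubicS R ^ 2 - 2 * cubicS R ^ 3 with hP1
    set P2 : CubicP R := C a1 + 2 * cubicS R with hP2
    refine Set.mem_of_eq_of_mem (third _ _ ?_)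
      (I.mul_mem_left (C (C u3))
        (I.add_mem (I.mul_mem_left P1 hr1mem) (I.mul_mem_left P2 hr2mem)))
    simp only [hP1, hP2, cubicR1, cubicR2, ha1, ha3, he1, he2, he3, he4, he5, he6, he7,
      map_mul, map_neg, map_ofNat, map_add, map_sub, map_pow]
    ring
  -- compute the trace
  rw [LinearMap.trace_eq_matrix_trace (CubicA R) b]
  rw [Matrix.trace]
  simp only [Matrix.diag, LinearMap.toMatrix_apply, Fin.sum_univ_eight]
  have shift' : ∀ i j : Fin 8, j ≠ i → cubicS R * cubicBasisElems R i = cubicBasisElems R j →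
      b.repr (f (b i)) i = 0 := by
    intro i j hij hs
    rw [hb i, hmul, hs, ← hb j, b.repr_self, Finsupp.single_apply, if_neg hij]
  have d0 : b.repr (f (b 0)) 0 = 0 := shift' 0 1 (by decide) (by rw [he0, he1, mul_one])
  have d1 : b.repr (f (b 1)) 1 = 0 := shift' 1 2 (by decide) (by rw [he1, he2]; ring)
  have d2 : b.repr (f (b 2)) 2 = 0 := shift' 2 3 (by decide) (by rw [he2, he3]; ring)
  have d4 : b.repr (f (b 4)) 4 = 0 := shift' 4 5 (by decide) (by rw [he4, he5])
  have d5 : b.repr (f (b 5)) 5 = 0 := shift' 5 6 (by decide) (by rw [he5, he6]; ring)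
  have d6 : b.repr (f (b 6)) 6 = 0 := shift' 6 7 (by decide) (by rw [he6, he7]; ring)
  have d3 : b.repr (f (b 3)) 3 = -a1 := by
    rw [key3]
    simp [b.repr_self, Finsupp.single_apply]
  have d7 : b.repr (f (b 7)) 7 = -(3 * a1) := by
    rw [key7]
    simp [b.repr_self, Finsupp.single_apply]
  rw [d0, d1, d2, d3, d4, d5, d6, d7]
  ring

end
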